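/- Let (V, Ω) be a finite-dimensional symplectic vector space with a symplectic linear action of a torus T (a compact connected abelian Lie group) such that the fixed subspace V_fix = { v : t.v = v for all t ∈ T } is trivial, and let τ be a linear involution on V with t ∘ τ = τ ∘ t⁻¹ for all t ∈ T. If the +1 eigenspace V₁ of τ is Lagrangian, then τ is anti-symplectic. -/

import Mathlib

open Module LinearMap

/-- If a connected group acts continuously and linearly on a finite-dimensional real
vector space with no nonzero fixed vector, then no nonzero vector is fixed by all squares. -/
theorem aux_sq_fix {V : Type*} [NormedAddCommGroup V] [NormedSpace ℝ V]
    [FiniteDimensional ℝ V]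
    {T : Type*} [TopologicalSpace T] [CommGroup T] [ConnectedSpace T]
    (ρ : T →* (V ≃ₗ[ℝ] V))
    (hcont : Continuous fun p : T × V => ρ p.1 p.2)
    (hfix : ∀ v : V, (∀ t, ρ t v = v) → v = 0) :
    ∀ x : V, (∀ s, ρ (s * s) x = x) → x = 0 := by
  classical
  have hmul : ∀ (a b : T) (v : V), ρ (a * b) v = ρ a (ρ b v) := by
    intro a b v; rw [map_mul]; rfl
  -- the subspace fixed by all squares
  set U : Submodule ℝ V :=
    { carrier := {x | ∀ s, ρ (s * s) x = x}
      add_mem' := fun hx hy s => by rw [map_add, hx s, hy s]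
      zero_mem' := fun s => by simp
      smul_mem' := fun c x hx s => by rw [map_smul, hx s] } with hU
  have hUmem : ∀ x : V, x ∈ U ↔ ∀ s, ρ (s * s) x = x := fun x => Iff.rfl
  -- U is invariant under the action
  have hUinv : ∀ (a : T) (x : V), x ∈ U → ρ a x ∈ U := by
    intro a x hx s
    rw [← hmul, mul_comm, hmul, hx s]
  -- a projection onto U
  obtain ⟨W, hW⟩ := Submodule.exists_isCompl U
  set Q0 : V →ₗ[ℝ] V := U.subtype ∘ₗ (U.projectionOnto W hW) with hQ0
  have hQ0mem : ∀ x, Q0 x ∈ U := fun x => (U.projectionOnto W hW x).2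
  have hQ0id : ∀ x ∈ U, Q0 x = x := by
    intro x hx
    simp only [hQ0, LinearMap.comp_apply, Submodule.subtype_apply]
    exact congrArg Subtype.val (Submodule.projectionOnto_apply_left hW ⟨x, hx⟩)
  -- the involution-like operators
  set A : T → (V →ₗ[ℝ] V) := fun s => ((ρ s : V ≃ₗ[ℝ] V) : V →ₗ[ℝ] V) ∘ₗ Q0 with hA
  have hAapp : ∀ s x, A s x = ρ s (Q0 x) := fun s x => rfl
  have hQ0Q0 : ∀ x, Q0 (Q0 x) = Q0 x := fun x => hQ0id _ (hQ0mem x)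
  have hQ0A : ∀ s x, Q0 (A s x) = A s x := by
    intro s x
    rw [hAapp]
    exact hQ0id _ (hUinv s _ (hQ0mem x))
  have hAQ0 : ∀ s x, A s (Q0 x) = A s x := by
    intro s x; rw [hAapp, hAapp, hQ0Q0]
  have hAA : ∀ s x, A s (A s x) = Q0 x := by
    intro s x
    rw [hAapp, hAapp, hQ0id _ (hUinv s _ (hQ0mem x)), ← hmul]
    exact (hQ0mem x) s
  set P : T → (V →ₗ[ℝ] V) := fun s => (2⁻¹ : ℝ) • (Q0 - A s) with hP
  have hPapp : ∀ s x, P s x = (2⁻¹ : ℝ) • (Q0 x - A s x) := by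
    intro s x; simp [hP]
  have hPP : ∀ s x, P s (P s x) = P s x := by
    intro s x
    simp only [hPapp, map_smul, map_sub, hQ0Q0, hQ0A, hAQ0, hAA]
    module
  have hProj : ∀ s, LinearMap.IsProj (LinearMap.range (P s)) (P s) := by
    intro s
    refine ⟨fun x => LinearMap.mem_range_self _ x, ?_⟩
    rintro x ⟨y, rfl⟩
    exact hPP s y
  have htrP : ∀ s, trace ℝ V (P s) = (finrank ℝ (LinearMap.range (P s)) : ℝ) :=
    fun s => (hProj s).trace
  -- trace of A s
  have htrA : ∀ s, trace ℝ V (A s) = trace ℝ V Q0 - 2 * trace ℝ V (P s) := by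
    intro s
    have : A s = Q0 - (2 : ℝ) • P s := by
      ext x
      rw [LinearMap.sub_apply, LinearMap.smul_apply, hPapp, smul_smul]
      norm_num
    rw [this, map_sub, map_smul, smul_eq_mul]
  -- continuity of the trace function
  have hcont' : Continuous fun s => trace ℝ V (A s) := by
    let b := finBasis ℝ V
    have : (fun s => trace ℝ V (A s)) =
        fun s => ∑ i, b.coord i (ρ s (Q0 (b i))) := by
      funext s
      rw [trace_eq_matrix_trace ℝ b, Matrix.trace]
      refine Finset.sum_congr rfl fun i _ => ?_
      rw [Matrix.diag_apply, LinearMap.toMatrix_apply]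
      rfl
    rw [this]
    refine continuous_finset_sum _ fun i _ => ?_
    have h1 : Continuous fun s : T => ρ s (Q0 (b i)) :=
      hcont.comp (continuous_id.prodMk continuous_const)
    exact ((b.coord i).continuous_of_finiteDimensional).comp h1
  -- the clopen set where trace is maximal
  set c : ℝ := trace ℝ V Q0 with hc
  set E : Set T := {s | trace ℝ V (A s) = c} with hE
  have hbound : ∀ s, trace ℝ V (A s) ≤ c ∧
      (trace ℝ V (A s) = c ∨ trace ℝ V (A s) ≤ c - 2) := by
    intro s
    have h2 := htrA s
    have h3 := htrP s
    rcases Nat.eq_zero_or_pos (finrank ℝ (LinearMap.range (P s))) with h | h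
    · constructor
      · rw [h2, h3, h]; norm_num
      · left; rw [h2, h3, h]; norm_num
    · have : (1 : ℝ) ≤ (finrank ℝ (LinearMap.range (P s)) : ℝ) := by
        exact_mod_cast h
      constructor
      · rw [h2, h3]; nlinarith
      · right; rw [h2, h3]; nlinarith
  have hone : (1 : T) ∈ E := by
    have : A 1 = Q0 := by
      ext x; rw [hAapp, map_one]; rfl
    simp [hE, this, hc]
  have hopen : IsOpen E := by
    have : E = (fun s => trace ℝ V (A s)) ⁻¹' Set.Ioi (c - 1) := by
      ext s
      simp only [hE, Set.mem_setOf_eq, Set.mem_preimage, Set.mem_Ioi]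
      constructor
      · intro h; rw [h]; linarith
      · intro h
        rcases (hbound s).2 with h' | h'
        · exact h'
        · linarith
    rw [this]
    exact isOpen_Ioi.preimage hcont'
  have hclosed : IsClosed E := by
    have : E = (fun s => trace ℝ V (A s)) ⁻¹' Set.Ici c := by
      ext s
      simp only [hE, Set.mem_setOf_eq, Set.mem_preimage, Set.mem_Ici]
      constructor
      · intro h; rw [h]
      · intro h; exact le_antisymm (hbound s).1 h
    rw [this]
    exact isClosed_Ici.preimage hcont'
  have hEuniv : E = Set.univ := (IsClopen.eq_univ ⟨hclosed, hopen⟩ ⟨1, hone⟩)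
  -- hence A s = Q0 for every s
  have hAeq : ∀ s x, A s x = Q0 x := by
    intro s x
    have hsE : s ∈ E := hEuniv ▸ Set.mem_univ s
    have h0 : trace ℝ V (P s) = 0 := by
      have := htrA s
      rw [hsE] at this
      linarith [this]
    have hrk : finrank ℝ (LinearMap.range (P s)) = 0 := by
      have := htrP s
      rw [h0] at this
      exact_mod_cast this.symm
    have hPz : P s x = 0 := by
      have : P s x ∈ LinearMap.range (P s) := LinearMap.mem_range_self _ x
      rwa [Submodule.finrank_eq_zero.mp hrk, Submodule.mem_bot] at this
    have h5 : (2⁻¹ : ℝ) • (Q0 x - A s x) = 0 := by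
      rw [← hPapp, hPz]
    rcases smul_eq_zero.mp h5 with h6 | h6
    · norm_num at h6
    · exact (sub_eq_zero.mp h6).symm
  intro x hx
  refine hfix x fun t => ?_
  have hxU : x ∈ U := hx
  have hx1 : ρ t x = A t x := by rw [hAapp, hQ0id x hxU]
  rw [hx1, hAeq, hQ0id x hxU]


open MeasureTheory



/-- Let (V, Ω) be a finite-dimensional symplectic vector space with
a continuous symplectic linear action of a torus T (compact connected abelian
group) without nonzero fixed vectors, and τ a linear involution with
t ∘ τ = τ ∘ t⁻¹.  If the +1 eigenspace of τ is Lagrangian, then τ is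
anti-symplectic. -/
theorem stmt_15 {V : Type*} [NormedAddCommGroup V] [NormedSpace ℝ V]
    [FiniteDimensional ℝ V]
    (Ω : V →ₗ[ℝ] V →ₗ[ℝ] ℝ)
    (halt : ∀ v, Ω v v = 0)
    (hnd : ∀ v, (∀ w, Ω v w = 0) → v = 0)
    {T : Type*} [TopologicalSpace T] [CommGroup T] [IsTopologicalGroup T]
    [CompactSpace T] [ConnectedSpace T]
    (ρ : T →* (V ≃ₗ[ℝ] V))
    (hcont : Continuous fun p : T × V => ρ p.1 p.2)
    (hsymp : ∀ t v w, Ω (ρ t v) (ρ t w) = Ω v w)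
    (hfix : ∀ v : V, (∀ t, ρ t v = v) → v = 0)
    (τ : V →ₗ[ℝ] V) (hτ : τ ∘ₗ τ = LinearMap.id)
    (hcompat : ∀ t v, ρ t (τ v) = τ (ρ t⁻¹ v))
    (V1 : Submodule ℝ V) (hV1 : ∀ v, v ∈ V1 ↔ τ v = v)
    (hLag : (∀ v ∈ V1, ∀ w ∈ V1, Ω v w = 0) ∧
      2 * Module.finrank ℝ V1 = Module.finrank ℝ V) :
    ∀ v w, Ω (τ v) (τ w) = - Ω v w := by
  classical
  have hmul : ∀ (a b : T) (v : V), ρ (a * b) v = ρ a (ρ b v) := by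
    intro a b v; rw [map_mul]; rfl
  have hone : ∀ v : V, ρ 1 v = v := by intro v; rw [map_one]; rfl
  -- measure-theoretic setup
  letI : MeasurableSpace T := borel T
  haveI : BorelSpace T := ⟨rfl⟩
  haveI : Nonempty T := ⟨1⟩
  set μ : Measure T := Measure.haarMeasure ⊤ with hμ
  haveI : IsProbabilityMeasure μ := ⟨by
    rw [hμ, ← TopologicalSpace.PositiveCompacts.coe_top (α := T)]
    exact Measure.haarMeasure_self⟩
  have hint : ∀ (f : T → V), Continuous f → Integrable f μ := fun f hf =>
    hf.integrable_of_hasCompactSupport (HasCompactSupport.of_compactSpace f)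
  have hcont1 : ∀ v : V, Continuous fun t : T => ρ (t * t) v := fun v =>
    hcont.comp ((continuous_id.mul continuous_id).prodMk continuous_const)
  have hcont2 : ∀ v : V, Continuous fun t : T => ρ ((t * t)⁻¹) v := fun v =>
    hcont.comp (((continuous_id.mul continuous_id).inv).prodMk continuous_const)
  -- an integral of a "square-covariant" function is zero
  have key0 : ∀ (f : T → V), Continuous f →
      (∀ s : T, ∃ a : T, ∀ t, ρ (s * s) (f t) = f (a * t)) →
      (∫ t, f t ∂μ) = 0 := by
    intro f hf hcov
    refine aux_sq_fix ρ hcont hfix _ (fun s => ?_)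
    obtain ⟨a, ha⟩ := hcov s
    set L : V →L[ℝ] V :=
      LinearMap.toContinuousLinearMap ((ρ (s * s) : V ≃ₗ[ℝ] V) : V →ₗ[ℝ] V) with hLdef
    have hL : ∀ x, L x = ρ (s * s) x := fun x => rfl
    have h1 : ρ (s * s) (∫ t, f t ∂μ) = ∫ t, ρ (s * s) (f t) ∂μ := by
      rw [← hL]
      rw [← L.integral_comp_comm (hint f hf)]
      simp [hL]
    rw [h1]
    have h2 : (fun t => ρ (s * s) (f t)) = fun t => f (a * t) := funext ha
    rw [h2]
    exact MeasureTheory.integral_mul_left_eq_self f a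
  have hQ : ∀ v : V, (∫ t, ρ (t * t) v ∂μ) = 0 := by
    intro v
    refine key0 _ (hcont1 v) fun s => ⟨s, fun t => ?_⟩
    rw [← hmul]
    congr 1
    rw [mul_mul_mul_comm]
  have hQ' : ∀ v : V, (∫ t, ρ ((t * t)⁻¹) v ∂μ) = 0 := by
    intro v
    refine key0 _ (hcont2 v) fun s => ⟨s⁻¹, fun t => ?_⟩
    rw [← hmul]
    congr 1
    simp [mul_inv, mul_comm, mul_left_comm]
  -- the -1 eigenspace is isotropic
  have hiso : ∀ v w : V, τ v = -v → τ w = -w → Ω v w = 0 := by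
    intro v w hv hw
    have hmem : ∀ (u : V), τ u = -u → ∀ t : T, (ρ t u - ρ t⁻¹ u) ∈ V1 := by
      intro u hu t
      rw [hV1, map_sub]
      have h1 := hcompat t⁻¹ u
      rw [inv_inv, hu, map_neg] at h1
      have h2 := hcompat t u
      rw [hu, map_neg] at h2
      rw [← h1, ← h2]
      abel
    have hiden : ∀ t : T, Ω (ρ (t * t) v) w + Ω (ρ ((t * t)⁻¹) v) w = 2 * Ω v w := by
      intro t
      have h0 := hLag.1 _ (hmem v hv t) _ (hmem w hw t)
      have e1 : Ω (ρ t v) (ρ t w) = Ω v w := hsymp t v w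
      have e2 : Ω (ρ t⁻¹ v) (ρ t⁻¹ w) = Ω v w := hsymp t⁻¹ v w
      have e3 : Ω (ρ t v) (ρ t⁻¹ w) = Ω (ρ (t * t) v) w := by
        have h3 := hsymp t (ρ t v) (ρ t⁻¹ w)
        rw [← hmul, ← hmul, mul_inv_cancel, hone] at h3
        exact h3.symm
      have e4 : Ω (ρ t⁻¹ v) (ρ t w) = Ω (ρ ((t * t)⁻¹) v) w := by
        have h3 := hsymp t⁻¹ (ρ t⁻¹ v) (ρ t w)
        rw [← hmul, ← hmul, inv_mul_cancel, hone] at h3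
        rw [show t⁻¹ * t⁻¹ = (t * t)⁻¹ by rw [mul_inv]] at h3
        exact h3.symm
      simp only [map_sub, LinearMap.sub_apply] at h0
      rw [e1, e2, e3, e4] at h0
      linarith
    have hintR : ∀ (g : T → ℝ), Continuous g → Integrable g μ := fun g hg =>
      hg.integrable_of_hasCompactSupport (HasCompactSupport.of_compactSpace g)
    set L : V →L[ℝ] ℝ := LinearMap.toContinuousLinearMap (Ω.flip w) with hLdef
    have hL : ∀ x, L x = Ω x w := fun x => rfl
    have i1 : (∫ t, Ω (ρ (t * t) v) w ∂μ) = 0 := by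
      have h5 := L.integral_comp_comm (hint _ (hcont1 v))
      rw [hQ v] at h5
      simpa [hL] using h5
    have i2 : (∫ t, Ω (ρ ((t * t)⁻¹) v) w ∂μ) = 0 := by
      have h5 := L.integral_comp_comm (hint _ (hcont2 v))
      rw [hQ' v] at h5
      simpa [hL] using h5
    have int1 : Integrable (fun t => Ω (ρ (t * t) v) w) μ := by
      refine hintR _ ?_
      exact (L.continuous).comp (hcont1 v) |>.congr (fun t => (hL _))
    have int2 : Integrable (fun t => Ω (ρ ((t * t)⁻¹) v) w) μ := by
      refine hintR _ ?_
      exact (L.continuous).comp (hcont2 v) |>.congr (fun t => (hL _))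
    have i3 : (∫ t, (Ω (ρ (t * t) v) w + Ω (ρ ((t * t)⁻¹) v) w) ∂μ) = 0 := by
      rw [integral_add int1 int2, i1, i2]; ring
    have i4 : (∫ _t : T, (2 * Ω v w : ℝ) ∂μ) = 2 * Ω v w := by simp
    have i5 : (2 : ℝ) * Ω v w = 0 := by
      rw [← i4, show (fun _t : T => (2 * Ω v w : ℝ)) = fun t =>
        (Ω (ρ (t * t) v) w + Ω (ρ ((t * t)⁻¹) v) w) from funext fun t => (hiden t).symm]
      exact i3
    linarith
  -- final assembly
  intro v w
  have hττ : ∀ u, τ (τ u) = u := by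
    intro u
    have := LinearMap.ext_iff.mp hτ u
    simpa using this
  set v1 : V := (2⁻¹ : ℝ) • (v + τ v) with hv1def
  set v2 : V := (2⁻¹ : ℝ) • (v - τ v) with hv2def
  set w1 : V := (2⁻¹ : ℝ) • (w + τ w) with hw1def
  set w2 : V := (2⁻¹ : ℝ) • (w - τ w) with hw2def
  have hv1 : τ v1 = v1 := by
    rw [hv1def, LinearMap.map_smul, map_add, hττ, add_comm]
  have hw1 : τ w1 = w1 := by
    rw [hw1def, LinearMap.map_smul, map_add, hττ, add_comm]
  have hv2 : τ v2 = -v2 := by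
    rw [hv2def, LinearMap.map_smul, map_sub, hττ, ← smul_neg, neg_sub]
  have hw2 : τ w2 = -w2 := by
    rw [hw2def, LinearMap.map_smul, map_sub, hττ, ← smul_neg, neg_sub]
  have hvsum : v = v1 + v2 := by rw [hv1def, hv2def]; module
  have hwsum : w = w1 + w2 := by rw [hw1def, hw2def]; module
  have hτv : τ v = v1 - v2 := by rw [hv1def, hv2def]; module
  have hτw : τ w = w1 - w2 := by rw [hw1def, hw2def]; module
  have z11 : Ω v1 w1 = 0 := hLag.1 _ ((hV1 _).mpr hv1) _ ((hV1 _).mpr hw1)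
  have z22 : Ω v2 w2 = 0 := hiso v2 w2 hv2 hw2
  rw [hτv, hτw]
  rw [hvsum, hwsum]
  simp only [map_sub, map_add, LinearMap.sub_apply, LinearMap.add_apply]
  linarith
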